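/- Let V be the Volterra operator on L²([0,1], ℂ). Then I − V is power-bounded: sup_{n∈ℕ} ‖(I − V)ⁿ‖ < ∞. -/

import Mathlib

open MeasureTheory Filter

/-- Lebesgue measure restricted to `[0,1]`. -/
noncomputable def μ01 : MeasureTheory.Measure ℝ :=
  MeasureTheory.volume.restrict (Set.Icc (0 : ℝ) 1)

namespace Stmt15

instance : IsFiniteMeasure μ01 := by unfold μ01; infer_instance
instance : NullSingletonClass μ01 := by unfold μ01; infer_instance

noncomputable abbrev E := MeasureTheory.Lp ℂ 2 μ01

local notation "⟪" x ", " y "⟫" => @inner ℂ _ _ x y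

section MulOp
variable {φ : ℝ → ℂ} {C : ℝ}

theorem mem_mul (hφ : Measurable φ) (hC : ∀ᵐ x ∂μ01, ‖φ x‖ ≤ C) (f : E) :
    AEEqFun.mk φ hφ.aestronglyMeasurable * (f : ℝ →ₘ[μ01] ℂ) ∈ Lp ℂ 2 μ01 := by
  refine Lp.mem_Lp_of_ae_le_mul (c := C) (g := f) ?_
  filter_upwards [AEEqFun.coeFn_mul (AEEqFun.mk φ hφ.aestronglyMeasurable) (f : ℝ →ₘ[μ01] ℂ),
    AEEqFun.coeFn_mk φ hφ.aestronglyMeasurable, hC] with x h1 h2 h3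
  rw [h1, Pi.mul_apply, norm_mul, h2]
  exact mul_le_mul_of_nonneg_right h3 (norm_nonneg _)

/-- the basic coeFn fact for the elements we build. -/
theorem mem_mul_coeFn (hφ : Measurable φ) (hC : ∀ᵐ x ∂μ01, ‖φ x‖ ≤ C) (f : E) :
    ((⟨AEEqFun.mk φ hφ.aestronglyMeasurable * (f : ℝ →ₘ[μ01] ℂ), mem_mul hφ hC f⟩ : E) : ℝ → ℂ)
      =ᵐ[μ01] fun x => φ x * (f : ℝ → ℂ) x := by
  filter_upwards [AEEqFun.coeFn_mul (AEEqFun.mk φ hφ.aestronglyMeasurable) (f : ℝ →ₘ[μ01] ℂ),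
    AEEqFun.coeFn_mk φ hφ.aestronglyMeasurable] with x h1 h2
  show ((AEEqFun.mk φ hφ.aestronglyMeasurable * (f : ℝ →ₘ[μ01] ℂ) : ℝ →ₘ[μ01] ℂ) : ℝ → ℂ) x = _
  rw [h1, Pi.mul_apply, h2]

/-- multiplication by a bounded measurable function, as a continuous linear map on L². -/
noncomputable def mulOp (hφ : Measurable φ) (hC : ∀ᵐ x ∂μ01, ‖φ x‖ ≤ C) (hC0 : 0 ≤ C) :
    E →L[ℂ] E := by
  refine LinearMap.mkContinuous
    { toFun := fun f => ⟨AEEqFun.mk φ hφ.aestronglyMeasurable * (f : ℝ →ₘ[μ01] ℂ), mem_mul hφ hC f⟩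
      map_add' := ?_
      map_smul' := ?_ } C ?_
  · intro f g
    apply Lp.ext (p := 2) (μ := μ01)
    filter_upwards [mem_mul_coeFn hφ hC (f + g), mem_mul_coeFn hφ hC f, mem_mul_coeFn hφ hC g,
      Lp.coeFn_add f g,
      Lp.coeFn_add (⟨_, mem_mul hφ hC f⟩ : E) (⟨_, mem_mul hφ hC g⟩ : E)] with x h1 h2 h3 h4 h5
    simp only [h1, h2, h3, h5, Pi.add_apply, h4, mul_add]
  · intro c f
    apply Lp.ext (p := 2) (μ := μ01)
    filter_upwards [mem_mul_coeFn hφ hC (c • f), mem_mul_coeFn hφ hC f,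
      Lp.coeFn_smul c f,
      Lp.coeFn_smul c (⟨_, mem_mul hφ hC f⟩ : E)] with x h1 h2 h3 h4
    simp only [h1, h3, h4, Pi.smul_apply, smul_eq_mul, RingHom.id_apply, h2]
    ring
  · intro f
    refine Lp.norm_le_mul_norm_of_ae_le_mul ?_
    filter_upwards [mem_mul_coeFn hφ hC f, hC] with x h1 h2
    show ‖((⟨_, mem_mul hφ hC f⟩ : E) : ℝ → ℂ) x‖ ≤ C * ‖(f : ℝ → ℂ) x‖
    rw [h1, norm_mul]
    exact mul_le_mul_of_nonneg_right h2 (norm_nonneg _)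

theorem mulOp_coeFn (hφ : Measurable φ) (hC : ∀ᵐ x ∂μ01, ‖φ x‖ ≤ C) (hC0 : 0 ≤ C) (f : E) :
    (mulOp hφ hC hC0 f : ℝ → ℂ) =ᵐ[μ01] fun x => φ x * (f : ℝ → ℂ) x :=
  mem_mul_coeFn hφ hC f

theorem mulOp_norm_apply_le (hφ : Measurable φ) (hC : ∀ᵐ x ∂μ01, ‖φ x‖ ≤ C) (hC0 : 0 ≤ C)
    (f : E) : ‖mulOp hφ hC hC0 f‖ ≤ C * ‖f‖ := by
  refine Lp.norm_le_mul_norm_of_ae_le_mul ?_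
  filter_upwards [mulOp_coeFn hφ hC hC0 f, hC] with x h1 h2
  rw [h1, norm_mul]
  exact mul_le_mul_of_nonneg_right h2 (norm_nonneg _)

end MulOp

theorem ae_mem_Icc : ∀ᵐ x ∂μ01, x ∈ Set.Icc (0 : ℝ) 1 := by
  unfold μ01; exact ae_restrict_mem measurableSet_Icc

theorem swap_lemma {g h : ℝ → ℂ} (hg : Integrable g μ01) (hh : Integrable h μ01) :
    ∫ t, g t * (∫ s in Set.Iic t, h s ∂μ01) ∂μ01
      = ∫ s, (∫ t in Set.Ici s, g t ∂μ01) * h s ∂μ01 := by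
  have hT : MeasurableSet {p : ℝ × ℝ | p.2 ≤ p.1} :=
    (isClosed_le continuous_snd continuous_fst).measurableSet
  have hk : Integrable ({p : ℝ × ℝ | p.2 ≤ p.1}.indicator fun p => g p.1 * h p.2)
      (μ01.prod μ01) := (Integrable.mul_prod hg hh).indicator hT
  have h1 : ∫ p, {p : ℝ × ℝ | p.2 ≤ p.1}.indicator (fun p => g p.1 * h p.2) p ∂(μ01.prod μ01)
      = ∫ t, g t * (∫ s in Set.Iic t, h s ∂μ01) ∂μ01 := by
    rw [integral_prod _ hk]
    congr 1
    ext t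
    have : (fun s => {p : ℝ × ℝ | p.2 ≤ p.1}.indicator (fun p => g p.1 * h p.2) (t, s))
        = (Set.Iic t).indicator (fun s => g t * h s) := by
      ext s
      by_cases hs : s ≤ t <;> simp [Set.indicator_apply, hs]
    rw [this, integral_indicator measurableSet_Iic, integral_const_mul]
  have h2 : ∫ p, {p : ℝ × ℝ | p.2 ≤ p.1}.indicator (fun p => g p.1 * h p.2) p ∂(μ01.prod μ01)
      = ∫ s, (∫ t in Set.Ici s, g t ∂μ01) * h s ∂μ01 := by
    rw [integral_prod_symm _ hk]
    congr 1
    ext s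
    have : (fun t => {p : ℝ × ℝ | p.2 ≤ p.1}.indicator (fun p => g p.1 * h p.2) (t, s))
        = (Set.Ici s).indicator (fun t => g t * h s) := by
      ext t
      by_cases hs : s ≤ t <;> simp [Set.indicator_apply, hs]
    rw [this, integral_indicator measurableSet_Ici, integral_mul_const]
  rw [← h1, h2]

theorem restrict_Icc_eq_Iic (x : ℝ) : μ01.restrict (Set.Icc 0 x) = μ01.restrict (Set.Iic x) := by
  unfold μ01
  rw [Measure.restrict_restrict measurableSet_Icc, Measure.restrict_restrict measurableSet_Iic]
  congr 1
  ext t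
  simp only [Set.mem_inter_iff, Set.mem_Icc, Set.mem_Iic]
  tauto

theorem integrable_of_L2 (f : E) : Integrable (f : ℝ → ℂ) μ01 :=
  (Lp.memLp f).integrable one_le_two

theorem integrable_conj {g : ℝ → ℂ} (hg : Integrable g μ01) :
    Integrable (fun s => (starRingEnd ℂ) (g s)) μ01 := by
  refine ⟨?_, ?_⟩
  · exact continuous_star.comp_aestronglyMeasurable hg.aestronglyMeasurable
  · simpa [HasFiniteIntegral] using hg.hasFiniteIntegral

/-- integrability of the "upper marginal × h" function -/
theorem integrable_upper {g h : ℝ → ℂ} (hg : Integrable g μ01) (hh : Integrable h μ01) :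
    Integrable (fun s => (∫ t in Set.Ici s, g t ∂μ01) * h s) μ01 := by
  have hT : MeasurableSet {p : ℝ × ℝ | p.1 ≤ p.2} :=
    (isClosed_le continuous_fst continuous_snd).measurableSet
  have hk : Integrable ({p : ℝ × ℝ | p.1 ≤ p.2}.indicator fun p => g p.2 * h p.1)
      (μ01.prod μ01) := by
    have : Integrable (fun p : ℝ × ℝ => g p.2 * h p.1) (μ01.prod μ01) := by
      have := (Integrable.mul_prod hg hh).swap
      simpa [Function.comp_def] using this
    exact this.indicator hT
  have := hk.integral_prod_left
  refine this.congr (Eventually.of_forall fun s => ?_)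
  have heq : (fun t => {p : ℝ × ℝ | p.1 ≤ p.2}.indicator (fun p => g p.2 * h p.1) (s, t))
      = (Set.Ici s).indicator (fun t => g t * h s) := by
    ext t
    by_cases hs : s ≤ t <;> simp [Set.indicator_apply, hs]
  show (∫ y, {p : ℝ × ℝ | p.1 ≤ p.2}.indicator (fun p => g p.2 * h p.1) (s, y) ∂μ01) = _
  rw [heq, integral_indicator measurableSet_Ici, integral_mul_const]

theorem integrable_lower {g h : ℝ → ℂ} (hg : Integrable g μ01) (hh : Integrable h μ01) :
    Integrable (fun s => h s * (∫ t in Set.Iic s, g t ∂μ01)) μ01 := by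
  have hT : MeasurableSet {p : ℝ × ℝ | p.2 ≤ p.1} :=
    (isClosed_le continuous_snd continuous_fst).measurableSet
  have hk : Integrable ({p : ℝ × ℝ | p.2 ≤ p.1}.indicator fun p => g p.2 * h p.1)
      (μ01.prod μ01) := by
    have : Integrable (fun p : ℝ × ℝ => g p.2 * h p.1) (μ01.prod μ01) := by
      have := (Integrable.mul_prod hg hh).swap
      simpa [Function.comp_def] using this
    exact this.indicator hT
  have := hk.integral_prod_left
  refine this.congr (Eventually.of_forall fun s => ?_)
  have heq : (fun t => {p : ℝ × ℝ | p.2 ≤ p.1}.indicator (fun p => g p.2 * h p.1) (s, t))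
      = (Set.Iic s).indicator (fun t => g t * h s) := by
    ext t
    by_cases hs : t ≤ s <;> simp [Set.indicator_apply, hs]
  show (∫ y, {p : ℝ × ℝ | p.2 ≤ p.1}.indicator (fun p => g p.2 * h p.1) (s, y) ∂μ01) = _
  rw [heq, integral_indicator measurableSet_Iic, integral_mul_const, mul_comm]

-- the exponential weights
noncomputable def eφ : ℝ → ℂ := fun t => ((Real.exp t : ℝ) : ℂ)
noncomputable def eφ' : ℝ → ℂ := fun t => ((Real.exp (-t) : ℝ) : ℂ)

theorem eφ_meas : Measurable eφ := Complex.measurable_ofReal.comp Real.measurable_exp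
theorem eφ'_meas : Measurable eφ' :=
  Complex.measurable_ofReal.comp (Real.measurable_exp.comp measurable_neg)

theorem eφ_bound : ∀ᵐ x ∂μ01, ‖eφ x‖ ≤ Real.exp 1 := by
  filter_upwards [ae_mem_Icc] with x hx
  simp only [eφ, Complex.norm_real, Real.norm_eq_abs, abs_of_pos (Real.exp_pos x)]
  exact Real.exp_le_exp.2 hx.2

theorem eφ'_bound : ∀ᵐ x ∂μ01, ‖eφ' x‖ ≤ 1 := by
  filter_upwards [ae_mem_Icc] with x hx
  simp only [eφ', Complex.norm_real, Real.norm_eq_abs, abs_of_pos (Real.exp_pos _)]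
  exact Real.exp_le_one_iff.2 (neg_nonpos.2 hx.1)

/-- the triangle integration-by-parts identity, for x ∈ [0,1] -/
theorem triangle {f : ℝ → ℂ} (hf : Integrable f μ01) {x : ℝ} (hx : x ∈ Set.Icc (0:ℝ) 1) :
    ∫ t in Set.Iic x, eφ t * (∫ s in Set.Iic t, f s ∂μ01) ∂μ01
      = eφ x * (∫ s in Set.Iic x, f s ∂μ01) - ∫ s in Set.Iic x, eφ s * f s ∂μ01 := by
  set g : ℝ → ℂ := (Set.Iic x).indicator eφ with hg
  have hgint : Integrable g μ01 := by
    refine Integrable.mono' (integrable_const (Real.exp 1)) ?_ ?_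
    · exact ((eφ_meas.indicator measurableSet_Iic)).aestronglyMeasurable
    · filter_upwards [ae_mem_Icc] with t ht
      by_cases h' : t ≤ x
      · rw [hg, Set.indicator_of_mem (Set.mem_Iic.2 h')]
        simp only [eφ, Complex.norm_real, Real.norm_eq_abs, abs_of_pos (Real.exp_pos t)]
        exact Real.exp_le_exp.2 ht.2
      · rw [hg, Set.indicator_of_notMem (by simpa using h')]
        simp [Real.exp_nonneg]
  have hs := swap_lemma hgint hf
  -- LHS of swap equals our LHS
  have hL : ∫ t, g t * (∫ s in Set.Iic t, f s ∂μ01) ∂μ01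
      = ∫ t in Set.Iic x, eφ t * (∫ s in Set.Iic t, f s ∂μ01) ∂μ01 := by
    rw [← integral_indicator measurableSet_Iic]
    refine integral_congr_ae (Eventually.of_forall fun t => ?_)
    rw [hg, Set.indicator_mul_left]
  -- inner integral of swap RHS
  have hR : ∀ᵐ s ∂μ01, (∫ t in Set.Ici s, g t ∂μ01) * f s
      = (Set.Iic x).indicator (fun s => (((Real.exp x - Real.exp s : ℝ)) : ℂ) * f s) s := by
    filter_upwards [ae_mem_Icc] with s hs
    have : ∫ t in Set.Ici s, g t ∂μ01 = ∫ t in Set.Icc s x, eφ t ∂μ01 := by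
      rw [hg, integral_indicator measurableSet_Iic, Measure.restrict_restrict measurableSet_Iic,
        Set.Iic_inter_Ici]
    rw [this]
    by_cases hsx : s ≤ x
    · have hsub : Set.Icc s x ⊆ Set.Icc (0:ℝ) 1 := Set.Icc_subset_Icc hs.1 hx.2
      have : (μ01.restrict (Set.Icc s x)) = volume.restrict (Set.Icc s x) := by
        unfold μ01
        rw [Measure.restrict_restrict measurableSet_Icc, Set.inter_eq_left.2 hsub]
      rw [this]
      have : ∫ t in Set.Icc s x, eφ t = (((∫ t in Set.Icc s x, Real.exp t) : ℝ) : ℂ) :=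
        integral_ofReal
      rw [this, integral_Icc_eq_integral_Ioc, ← intervalIntegral.integral_of_le hsx,
        integral_exp, Set.indicator_of_mem (Set.mem_Iic.2 hsx)]
    · rw [Set.Icc_eq_empty hsx, Measure.restrict_empty, integral_zero_measure,
        Set.indicator_of_notMem (by simpa using hsx), zero_mul]
  rw [hL] at hs
  rw [hs, integral_congr_ae hR, integral_indicator measurableSet_Iic]
  have hint1 : Integrable (fun s => (Real.exp x : ℂ) * f s) (μ01.restrict (Set.Iic x)) :=
    (hf.restrict.const_mul _)
  have hint2 : Integrable (fun s => eφ s * f s) (μ01.restrict (Set.Iic x)) := by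
    refine Integrable.mono' (hf.norm.restrict.const_mul (Real.exp 1)) ?_ ?_
    · exact (eφ_meas.aestronglyMeasurable.mul hf.aestronglyMeasurable).restrict
    · refine ae_restrict_of_ae ?_
      filter_upwards [ae_mem_Icc] with t ht
      rw [norm_mul]
      simp only [eφ, Complex.norm_real, Real.norm_eq_abs, abs_of_pos (Real.exp_pos t)]
      exact mul_le_mul_of_nonneg_right (Real.exp_le_exp.2 ht.2) (norm_nonneg _)
  have : ∀ s : ℝ, (((Real.exp x - Real.exp s : ℝ)) : ℂ) * f s
      = (Real.exp x : ℂ) * f s - eφ s * f s := by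
    intro s
    simp only [eφ, Complex.ofReal_sub, sub_mul]
  rw [integral_congr_ae (Eventually.of_forall fun s => this s), integral_sub hint1 hint2,
    integral_const_mul]
  rfl

-- the two weight operators
noncomputable def Mop : E →L[ℂ] E := mulOp eφ_meas eφ_bound (Real.exp_nonneg 1)
noncomputable def M'op : E →L[ℂ] E := mulOp eφ'_meas eφ'_bound zero_le_one

theorem Mop_coeFn (f : E) : (Mop f : ℝ → ℂ) =ᵐ[μ01] fun x => eφ x * (f : ℝ → ℂ) x :=
  mulOp_coeFn eφ_meas eφ_bound (Real.exp_nonneg 1) f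
theorem M'op_coeFn (f : E) : (M'op f : ℝ → ℂ) =ᵐ[μ01] fun x => eφ' x * (f : ℝ → ℂ) x :=
  mulOp_coeFn eφ'_meas eφ'_bound zero_le_one f
theorem Mop_norm_le (f : E) : ‖Mop f‖ ≤ Real.exp 1 * ‖f‖ :=
  mulOp_norm_apply_le eφ_meas eφ_bound (Real.exp_nonneg 1) f
theorem M'op_norm_le (f : E) : ‖M'op f‖ ≤ ‖f‖ := by
  simpa [M'op] using mulOp_norm_apply_le eφ'_meas eφ'_bound zero_le_one f

theorem Mop_M'op (f : E) : Mop (M'op f) = f := by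
  apply Lp.ext (p := 2) (μ := μ01)
  filter_upwards [Mop_coeFn (M'op f), M'op_coeFn f] with x h1 h2
  rw [h1, h2]
  simp only [eφ, eφ']
  rw [← mul_assoc, ← Complex.ofReal_mul, ← Real.exp_add]
  simp

section VolterraOp

variable {V : E →L[ℂ] E}
  (hV : ∀ f : E, ∀ᵐ x ∂μ01, (V f : ℝ → ℂ) x = ∫ t in Set.Icc (0 : ℝ) x, (f : ℝ → ℂ) t ∂μ01)
include hV

theorem hViic (f : E) :
    ∀ᵐ x ∂μ01, (V f : ℝ → ℂ) x = ∫ t in Set.Iic x, (f : ℝ → ℂ) t ∂μ01 := by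
  filter_upwards [hV f] with x hx
  rw [hx, restrict_Icc_eq_Iic]

theorem re_inner_nonneg (f : E) : 0 ≤ Complex.re ⟪V f, f⟫ := by
  have hint : Integrable (f : ℝ → ℂ) μ01 := integrable_of_L2 f
  have hconj : Integrable (fun s => (starRingEnd ℂ) ((f : ℝ → ℂ) s)) μ01 := integrable_conj hint
  set I : ℂ := ⟪V f, f⟫ with hI
  have hIeq : I = ∫ t, (f : ℝ → ℂ) t * (∫ s in Set.Iic t, (starRingEnd ℂ) ((f : ℝ → ℂ) s) ∂μ01)
      ∂μ01 := by
    rw [hI, L2.inner_def]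
    refine integral_congr_ae ?_
    filter_upwards [hViic hV f] with x hx
    rw [RCLike.inner_apply, hx, ← integral_conj, mul_comm]
  have hswap : I = ∫ s, (∫ t in Set.Ici s, (f : ℝ → ℂ) t ∂μ01) * (starRingEnd ℂ) ((f : ℝ → ℂ) s)
      ∂μ01 := by
    rw [hIeq]; exact swap_lemma hint hconj
  have hconjI : (starRingEnd ℂ) I
      = ∫ t, (starRingEnd ℂ) ((f : ℝ → ℂ) t) * (∫ s in Set.Iic t, (f : ℝ → ℂ) s ∂μ01) ∂μ01 := by
    rw [hIeq, ← integral_conj]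
    refine integral_congr_ae (Eventually.of_forall fun t => ?_)
    simp only [map_mul]
    congr 1
    rw [integral_conj, Complex.conj_conj]
  have hsum : I + (starRingEnd ℂ) I
      = (starRingEnd ℂ) (∫ t, (f : ℝ → ℂ) t ∂μ01) * ∫ t, (f : ℝ → ℂ) t ∂μ01 := by
    rw [hconjI, hswap, ← integral_add (integrable_upper hint hconj) (integrable_lower hint hconj)]
    have : ∀ s : ℝ, (∫ t in Set.Ici s, (f : ℝ → ℂ) t ∂μ01) * (starRingEnd ℂ) ((f : ℝ → ℂ) s)
        + (starRingEnd ℂ) ((f : ℝ → ℂ) s) * (∫ t in Set.Iic s, (f : ℝ → ℂ) t ∂μ01)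
        = (starRingEnd ℂ) ((f : ℝ → ℂ) s) * ∫ t, (f : ℝ → ℂ) t ∂μ01 := by
      intro s
      have hsplit : (∫ t in Set.Iic s, (f : ℝ → ℂ) t ∂μ01)
          + (∫ t in Set.Ici s, (f : ℝ → ℂ) t ∂μ01) = ∫ t, (f : ℝ → ℂ) t ∂μ01 := by
        rw [integral_Ici_eq_integral_Ioi, ← Set.compl_Iic]
        exact integral_add_compl measurableSet_Iic hint
      rw [← hsplit]
      ring
    rw [integral_congr_ae (Eventually.of_forall this), integral_mul_const, integral_conj]
  have h2re : 2 * I.re = ((starRingEnd ℂ) (∫ t, (f : ℝ → ℂ) t ∂μ01)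
      * ∫ t, (f : ℝ → ℂ) t ∂μ01).re := by
    rw [← hsum]
    simp [Complex.add_re, Complex.conj_re]
    ring
  have hpos : 0 ≤ ((starRingEnd ℂ) (∫ t, (f : ℝ → ℂ) t ∂μ01) * ∫ t, (f : ℝ → ℂ) t ∂μ01).re := by
    rw [mul_comm, Complex.mul_conj]
    simp [Complex.normSq_nonneg]
  have : Complex.re ⟪V f, f⟫ = I.re := rfl
  linarith [h2re, hpos]

theorem key (f : E) : (1 - V) (Mop ((1 + V) f)) = Mop f := by
  set w := Mop ((1 + V) f) with hwdef
  set F : ℝ → ℂ := fun t => ∫ s in Set.Iic t, (f : ℝ → ℂ) s ∂μ01 with hF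
  have hfint : Integrable (f : ℝ → ℂ) μ01 := integrable_of_L2 f
  have hw : (w : ℝ → ℂ) =ᵐ[μ01] fun t => eφ t * ((f : ℝ → ℂ) t + F t) := by
    have hadd : ((1 + V) f : E) = f + V f := by
      simp [ContinuousLinearMap.add_apply]
    filter_upwards [Mop_coeFn ((1 + V) f), Lp.coeFn_add f (V f), hViic hV f] with t h1 h2 h3
    rw [hwdef, h1, hadd, h2, Pi.add_apply, h3]
  have i1 : Integrable (fun t => eφ t * (f : ℝ → ℂ) t) μ01 :=
    (integrable_of_L2 (Mop f)).congr (Mop_coeFn f)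
  have i2 : Integrable (fun t => eφ t * F t) μ01 := by
    refine (integrable_of_L2 (Mop (V f))).congr ?_
    filter_upwards [Mop_coeFn (V f), hViic hV f] with t h1 h2
    rw [h1, h2]
  have hVw : ∀ᵐ x ∂μ01, (V w : ℝ → ℂ) x = eφ x * F x := by
    filter_upwards [hViic hV w, ae_mem_Icc] with x hx hmem
    rw [hx, integral_congr_ae (ae_restrict_of_ae hw)]
    have hsplit : ∫ t in Set.Iic x, eφ t * ((f : ℝ → ℂ) t + F t) ∂μ01
        = (∫ t in Set.Iic x, eφ t * (f : ℝ → ℂ) t ∂μ01)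
          + ∫ t in Set.Iic x, eφ t * F t ∂μ01 := by
      rw [← integral_add i1.restrict i2.restrict]
      refine integral_congr_ae (Eventually.of_forall fun t => ?_)
      simp [mul_add]
    rw [hsplit, triangle hfint hmem]
    ring
  apply Lp.ext (p := 2) (μ := μ01)
  have hsub : ((1 - V) w : E) = w - V w := by
    simp [ContinuousLinearMap.sub_apply]
  rw [hsub]
  filter_upwards [Lp.coeFn_sub w (V w), hw, hVw, Mop_coeFn f] with x h1 h2 h3 h4
  rw [h1, Pi.sub_apply, h2, h3, h4]
  ring

theorem norm_le_add (f : E) : ‖f‖ ≤ ‖(1 + V) f‖ := by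
  have hadd : ((1 + V) f : E) = f + V f := by simp [ContinuousLinearMap.add_apply]
  rw [hadd]
  have hsq : ‖f‖ ^ 2 ≤ ‖f + V f‖ ^ 2 := by
    rw [norm_add_sq (𝕜 := ℂ)]
    have h1 : RCLike.re ⟪f, V f⟫ = Complex.re ⟪V f, f⟫ := inner_re_symm _ _
    have h2 := re_inner_nonneg hV f
    nlinarith [norm_nonneg (V f)]
  have := Real.sqrt_le_sqrt hsq
  rwa [Real.sqrt_sq (norm_nonneg _), Real.sqrt_sq (norm_nonneg _)] at this

omit hV in
theorem norm_le_add_gen (T : E →L[ℂ] E) (hT : ∀ f, 0 ≤ Complex.re ⟪T f, f⟫) (f : E) :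
    ‖f‖ ≤ ‖f + T f‖ := by
  have hsq : ‖f‖ ^ 2 ≤ ‖f + T f‖ ^ 2 := by
    rw [norm_add_sq (𝕜 := ℂ)]
    have h1 : RCLike.re ⟪f, T f⟫ = Complex.re ⟪T f, f⟫ := inner_re_symm _ _
    nlinarith [norm_nonneg (T f), hT f]
  have := Real.sqrt_le_sqrt hsq
  rwa [Real.sqrt_sq (norm_nonneg _), Real.sqrt_sq (norm_nonneg _)] at this

theorem adj_re_nonneg (g : E) : 0 ≤ Complex.re ⟪(ContinuousLinearMap.adjoint V) g, g⟫ := by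
  rw [ContinuousLinearMap.adjoint_inner_left]
  have h1 : RCLike.re ⟪g, V g⟫ = Complex.re ⟪V g, g⟫ := inner_re_symm _ _
  rw [show Complex.re ⟪g, V g⟫ = RCLike.re ⟪g, V g⟫ from rfl, h1]
  exact re_inner_nonneg hV g

theorem surj : Function.Surjective ⇑(1 + V) := by
  have hb : ∀ f : E, ‖f‖ ≤ ‖(1 + V) f‖ := norm_le_add hV
  set N : E →L[ℂ] E := 1 + V with hN
  set K : Submodule ℂ E := LinearMap.range (N : E →ₗ[ℂ] E) with hK
  have hclosed : IsClosed (K : Set E) := by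
    have h1 : AntilipschitzWith 1 ⇑N :=
      ContinuousLinearMap.antilipschitz_of_bound N (by simpa using hb)
    have h2 := h1.isClosed_range N.uniformContinuous
    have : (K : Set E) = Set.range ⇑N := by
      rw [hK]; rfl
    rwa [this]
  have horth : Kᗮ = ⊥ := by
    rw [Submodule.eq_bot_iff]
    intro y hy
    have hadjy : ContinuousLinearMap.adjoint N y = 0 := by
      rw [← inner_self_eq_zero (𝕜 := ℂ), ContinuousLinearMap.adjoint_inner_left]
      exact (Submodule.mem_orthogonal' K y).1 hy _ (LinearMap.mem_range_self _ _)
    have hAadd : ContinuousLinearMap.adjoint N = 1 + ContinuousLinearMap.adjoint V := by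
      rw [hN, map_add]
      congr 1
      rw [ContinuousLinearMap.one_def]
      exact ContinuousLinearMap.adjoint_id
    have hlow := norm_le_add_gen (ContinuousLinearMap.adjoint V) (adj_re_nonneg hV) y
    have : (1 + ContinuousLinearMap.adjoint V) y = y + ContinuousLinearMap.adjoint V y := by
      simp [ContinuousLinearMap.add_apply]
    rw [← this, ← hAadd, hadjy, norm_zero] at hlow
    exact norm_le_zero_iff.1 hlow
  have htop : K = ⊤ := by
    haveI : CompleteSpace K := hclosed.completeSpace_coe
    exact Submodule.orthogonal_eq_bot_iff.mp horth
  intro y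
  have hyK : y ∈ K := by rw [htop]; exact Submodule.mem_top
  exact LinearMap.mem_range.mp hyK

theorem powerbound : ∃ C : ℝ, ∀ n : ℕ, ‖(1 - V) ^ n‖ ≤ C := by
  refine ⟨Real.exp 1, fun n => ?_⟩
  have hkey : ∀ n : ℕ, ∀ f : E, ((1 - V) ^ n) (Mop (((1 + V) ^ n) f)) = Mop f := by
    intro n
    induction n with
    | zero => simp
    | succ n ih =>
      intro f
      rw [pow_succ (1 + V) n, ContinuousLinearMap.mul_apply, pow_succ' (1 - V) n,
        ContinuousLinearMap.mul_apply, ih ((1 + V) f), key hV f]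
  have hlow : ∀ n : ℕ, ∀ f : E, ‖f‖ ≤ ‖((1 + V) ^ n) f‖ := by
    intro n
    induction n with
    | zero => simp
    | succ n ih =>
      intro f
      rw [pow_succ (1 + V) n, ContinuousLinearMap.mul_apply]
      exact (norm_le_add hV f).trans (ih ((1 + V) f))
  have hsurjn : ∀ n : ℕ, Function.Surjective ⇑((1 + V) ^ n) := by
    intro n
    induction n with
    | zero => simpa using Function.surjective_id
    | succ n ih =>
      have : ⇑((1 + V) ^ (n + 1)) = ⇑((1 + V) ^ n) ∘ ⇑(1 + V) := by
        ext f
        rw [pow_succ (1 + V) n]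
        rfl
      rw [this]
      exact ih.comp (surj hV)
  refine ContinuousLinearMap.opNorm_le_bound _ (Real.exp_pos 1).le fun f => ?_
  obtain ⟨h, hh⟩ := hsurjn n (M'op f)
  calc ‖((1 - V) ^ n) f‖ = ‖((1 - V) ^ n) (Mop (((1 + V) ^ n) h))‖ := by rw [hh, Mop_M'op]
    _ = ‖Mop h‖ := by rw [hkey n h]
    _ ≤ Real.exp 1 * ‖h‖ := Mop_norm_le h
    _ ≤ Real.exp 1 * ‖((1 + V) ^ n) h‖ :=
        mul_le_mul_of_nonneg_left (hlow n h) (Real.exp_nonneg 1)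
    _ = Real.exp 1 * ‖M'op f‖ := by rw [hh]
    _ ≤ Real.exp 1 * ‖f‖ := mul_le_mul_of_nonneg_left (M'op_norm_le f) (Real.exp_nonneg 1)

end VolterraOp
end Stmt15

/-- If `V` is the Volterra operator on `L²([0,1], ℂ)`, i.e. the bounded operator
with `(Vf)(x) = ∫₀ˣ f(t) dt` a.e., then `I − V` is power-bounded. -/
theorem stmt_15
    (V : MeasureTheory.Lp ℂ 2 μ01 →L[ℂ] MeasureTheory.Lp ℂ 2 μ01)
    (hV : ∀ f : MeasureTheory.Lp ℂ 2 μ01,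
      ∀ᵐ x ∂μ01, (V f : ℝ → ℂ) x = ∫ t in Set.Icc (0 : ℝ) x, f t ∂μ01) :
    ∃ C : ℝ, ∀ n : ℕ, ‖(1 - V) ^ n‖ ≤ C :=
  Stmt15.powerbound hV
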